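/- arXiv:1109.6220 — 2 statements merged into one kernel-verified Lean document; each statement's English description precedes it below -/
import Mathlib

section
/- Let G be a concurrent game with initial state s_0 and let σ be a pure Nash equilibrium of (G, s_0) with payoff vector z (that is, player i's expected payoff is z_i for each i). Then there exists an infinite path π in the graph G(z) starting from s_0 with pay_i(π) = z_i for each player i. -/
open MeasureTheory Filter

noncomputable section

instance : Fact ((0:ℝ) < 1) := ⟨one_pos⟩

/-- The source of randomness used to run strategies: a countable product of circle groups,
which is a compact group, equipped below with its normalised Haar measure.  Under this
measure the coordinates (read as reals in `[0,1)`) are i.i.d. uniform random variables. -/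
abbrev USpace : Type := ℕ → AddCircle (1:ℝ)

/-- The normalised Haar (probability) measure on `USpace`. -/
def uHaar : Measure USpace :=
  ((Measure.addHaar (G := USpace)) Set.univ)⁻¹ • Measure.addHaar

/-- The `n`-th uniform coordinate, as a real number in `[0,1)`. -/
def coordReal (u : USpace) (n : ℕ) : ℝ := ((AddCircle.equivIco 1 0) (u n) : ℝ)

/-- A concurrent game with players `P`, states `S` and actions `A` (all finite and nonempty):
each player `i` has a nonempty set `act i s` of actions available at each state `s`, there is a
transition function `tr` and a reward function `rew i` for each player. -/
structure ConcurrentGame (P S A : Type) [Fintype P] [Nonempty P] [Fintype S] [Nonempty S]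
    [Fintype A] [Nonempty A] : Type where
  act : P → S → Set A
  act_nonempty : ∀ i s, (act i s).Nonempty
  tr : S → (P → A) → S
  rew : P → S → ℝ

/-- A history (without its final state): the list of (state, action profile) pairs seen so far,
in chronological order. -/
abbrev Hist (P S A : Type) := List (S × (P → A))

variable {P S A : Type} [Fintype P] [Nonempty P] [Fintype S] [Nonempty S]
  [Fintype A] [Nonempty A] [DecidableEq P]

namespace ConcurrentGame

/-- A (randomised) strategy of player `i`: for every history `x` and current state `s`,
a probability distribution on actions, supported on the available actions `act i s`. -/
structure Strategy (G : ConcurrentGame P S A) (i : P) where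
  prob : Hist P S A → S → A → ℝ
  nonneg : ∀ x s a, 0 ≤ prob x s a
  sum_one : ∀ x s, ∑ a, prob x s a = 1
  supp : ∀ x s a, prob x s a ≠ 0 → a ∈ G.act i s

variable {G : ConcurrentGame P S A}

/-- A pure strategy: every prescribed distribution is degenerate. -/
def Strategy.IsPure {i : P} (σ : Strategy G i) : Prop := ∀ x s, ∃ a, σ.prob x s a = 1

/-- A stationary strategy: depends only on the current state. -/
def Strategy.IsStationary {i : P} (σ : Strategy G i) : Prop :=
  ∀ x y s, σ.prob x s = σ.prob y s

/-- A positional strategy: pure and stationary. -/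
def Strategy.IsPositional {i : P} (σ : Strategy G i) : Prop :=
  σ.IsPure ∧ σ.IsStationary

end ConcurrentGame

/-- A strategy profile: one strategy for each player. -/
abbrev Profile (G : ConcurrentGame P S A) := ∀ i : P, G.Strategy i

namespace ConcurrentGame

def IsPureProfile {G : ConcurrentGame P S A} (σ : Profile G) : Prop := ∀ i, (σ i).IsPure
def IsStationaryProfile {G : ConcurrentGame P S A} (σ : Profile G) : Prop :=
  ∀ i, (σ i).IsStationary
def IsPositionalProfile {G : ConcurrentGame P S A} (σ : Profile G) : Prop :=
  ∀ i, (σ i).IsPositional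

variable (G : ConcurrentGame P S A)

/-- An action profile is legal at `s` if each player's action is available to her. -/
def Legal (s : S) (a : P → A) : Prop := ∀ i, a i ∈ G.act i s

/-- A play of the game: an infinite sequence of (state, action profile) pairs such that every
action profile is legal and consecutive states are related by the transition function. -/
def IsPlay (π : ℕ → S × (P → A)) : Prop :=
  ∀ n, G.Legal (π n).1 (π n).2 ∧ (π (n + 1)).1 = G.tr (π n).1 (π n).2

/-- The limit-average (mean) payoff of player `i` along a sequence of states. -/
def payOf (i : P) (ss : ℕ → S) : ℝ :=
  Filter.liminf (fun n : ℕ => (∑ j ∈ Finset.range n, G.rew i (ss j)) / n) Filter.atTop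

/-- The probability that profile `a` is played after history `(x, s)` under profile `σ`. -/
def weight (σ : Profile G) (x : Hist P S A) (s : S) (a : P → A) : ℝ :=
  ∏ i, (σ i).prob x s (a i)

/-- cumulative distribution of `f` w.r.t. a fixed enumeration of action profiles. -/
def cum (f : (P → A) → ℝ) (k : ℕ) : ℝ :=
  ∑ b ∈ Finset.univ.filter (fun b => ((Fintype.equivFin (P → A)) b : ℕ) < k), f b

/-- Sample an action profile from the distribution `f` via inverse-cdf transform of `u ∈ [0,1)`. -/
def pick (f : (P → A) → ℝ) (u : ℝ) : P → A :=
  (Fintype.equivFin (P → A)).symm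
    (if h : (Finset.univ.filter
          (fun k : Fin (Fintype.card (P → A)) => cum (P := P) (A := A) f ((k : ℕ) + 1) ≤ u)).card
        < Fintype.card (P → A)
      then ⟨_, h⟩ else ⟨0, Fintype.card_pos⟩)

/-- The history induced from initial state `s₀` by a finite sequence of action profiles. -/
def histOf (s₀ : S) : List (P → A) → Hist P S A × S
  | [] => ([], s₀)
  | a :: l =>
    let h : Hist P S A × S := histOf (G.tr s₀ a) l
    ((s₀, a) :: h.1, h.2)

/-- The first `n` action profiles of the play run by profile `σ` from `s₀`,
driven by the source of randomness `u`. -/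
def samplePrefix (σ : Profile G) (s₀ : S) (u : USpace) : ℕ → List (P → A)
  | 0 => []
  | n + 1 =>
    let l : List (P → A) := samplePrefix σ s₀ u n
    let h : Hist P S A × S := G.histOf s₀ l
    l ++ [pick (G.weight σ h.1 h.2) (coordReal u n)]

/-- The state at time `n` of the play run by `σ` from `s₀` with randomness `u`. -/
def stateAt (σ : Profile G) (s₀ : S) (u : USpace) (n : ℕ) : S :=
  (G.histOf s₀ (G.samplePrefix σ s₀ u n)).2

/-- The expected (limit-average) payoff of player `i` under the strategy profile `σ`,
starting from `s₀`: the integral of the mean payoff over the induced measure on plays. -/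
def expPay (σ : Profile G) (s₀ : S) (i : P) : ℝ :=
  ∫ u, G.payOf i (G.stateAt σ s₀ u) ∂uHaar

/-- The probability that the play under `σ` from `s₀` ever visits the set `T` of states. -/
def probVisit (σ : Profile G) (s₀ : S) (T : Set S) : ℝ :=
  (uHaar {u | ∃ n, G.stateAt σ s₀ u n ∈ T}).toReal

/-- A Nash equilibrium: no player can increase her expected payoff by unilaterally
switching to another strategy. -/
def IsNash (σ : Profile G) (s₀ : S) : Prop :=
  ∀ (i : P) (τ : G.Strategy i),
    G.expPay (Function.update σ i τ) s₀ i ≤ G.expPay σ s₀ i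

/-- `pval i s`: the least payoff the coalition of all other players can inflict on player `i`
using pure strategy profiles, when the game starts at `s`. -/
def pval (i : P) (s : S) : ℝ :=
  ⨅ σ : {σ : Profile G // IsPureProfile σ}, ⨆ τ : G.Strategy i,
    G.expPay (Function.update σ.1 i τ) s i

/-- A state is terminal if every legal action profile leads back to it. -/
def Terminal (s : S) : Prop := ∀ a, G.Legal s a → G.tr s a = s

/-- A terminal-reward game: non-zero rewards occur only at terminal states. -/
def IsTerminalReward : Prop := ∀ (i : P) (s : S), ¬ G.Terminal s → G.rew i s = 0

/-- `a` is `z`-secure at `s`: `a` is legal at `s`, and whenever a single player `i` deviates to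
some available action `b`, the resulting state has `pval i ≤ z i`. -/
def zSecure (z : P → EReal) (s : S) (a : P → A) : Prop :=
  G.Legal s a ∧
    ∀ (i : P), ∀ b ∈ G.act i s, (G.pval i (G.tr s (Function.update a i b)) : EReal) ≤ z i

/-- The edge relation of the graph `G(z)`: an edge from `s` to `t` iff some `z`-secure action
profile at `s` leads to `t`. -/
def secureEdge (z : P → EReal) (s t : S) : Prop :=
  ∃ a, G.zSecure z s a ∧ G.tr s a = t

end ConcurrentGame

end

/-! ## Auxiliary material for the proof -/

noncomputable section

open MeasureTheory Filter

/-! ### Real-analysis lemmas -/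

lemma mkLow' {f : ℕ → ℝ} {K : ℝ} (hK : ∀ n, K ≤ f n) :
    Filter.IsBoundedUnder (· ≥ ·) Filter.atTop f :=
  Filter.isBoundedUnder_of ⟨K, fun n => hK n⟩

lemma mkCob' {f : ℕ → ℝ} {K : ℝ} (hK : ∀ n, f n ≤ K) :
    Filter.IsCoboundedUnder (· ≥ ·) Filter.atTop f :=
  Filter.IsBoundedUnder.isCoboundedUnder_ge (Filter.isBoundedUnder_of ⟨K, fun n => hK n⟩)

lemma abs_avg_le' {c : ℕ → ℝ} {M : ℝ} (hM : 0 ≤ M) (h : ∀ j, |c j| ≤ M) (n : ℕ) :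
    |(∑ j ∈ Finset.range n, c j) / n| ≤ M := by
  rcases Nat.eq_zero_or_pos n with rfl | hn
  · simpa using hM
  · have hn' : (0:ℝ) < n := by exact_mod_cast hn
    rw [abs_div, abs_of_nonneg hn'.le, div_le_iff₀ hn']
    calc |∑ j ∈ Finset.range n, c j| ≤ ∑ j ∈ Finset.range n, |c j| :=
          Finset.abs_sum_le_sum_abs _ _
      _ ≤ ∑ _j ∈ Finset.range n, M := Finset.sum_le_sum fun j _ => h j
      _ = M * n := by simp [mul_comm]

lemma abs_liminf_le' {c : ℕ → ℝ} {M : ℝ} (h : ∀ n, |c n| ≤ M) :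
    |Filter.liminf c Filter.atTop| ≤ M := by
  rw [abs_le]
  constructor
  · exact Filter.le_liminf_of_le (mkCob' fun n => (abs_le.1 (h n)).2)
      (Eventually.of_forall fun n => (abs_le.1 (h n)).1)
  · calc liminf c atTop ≤ liminf (fun _ : ℕ => M) atTop :=
          Filter.liminf_le_liminf (Eventually.of_forall fun n : ℕ => (abs_le.1 (h n)).2)
            (mkLow' fun n => (abs_le.1 (h n)).1) (mkCob' fun _ => le_rfl)
      _ = M := Filter.liminf_const M

lemma liminf_avg_shift {M : ℝ} (c d : ℕ → ℝ) (m : ℕ)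
    (hc : ∀ j, |c j| ≤ M) (hd : ∀ j, |d j| ≤ M) (h : ∀ j, d (m + j) = c j) :
    Filter.liminf (fun n : ℕ => (∑ j ∈ Finset.range n, d j) / n) Filter.atTop
      = Filter.liminf (fun n : ℕ => (∑ j ∈ Finset.range n, c j) / n) Filter.atTop := by
  have hM : 0 ≤ M := le_trans (abs_nonneg _) (hc 0)
  set A : ℕ → ℝ := fun n => (∑ j ∈ Finset.range n, c j) / n with hA
  set B : ℕ → ℝ := fun n => (∑ j ∈ Finset.range n, d j) / n with hB
  set C : ℝ := ∑ j ∈ Finset.range m, d j with hC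
  have habsA : ∀ n, |A n| ≤ M := abs_avg_le' hM hc
  have habsB : ∀ n, |B n| ≤ M := abs_avg_le' hM hd
  have step1 : Filter.liminf B Filter.atTop = Filter.liminf (fun n => B (n + m)) Filter.atTop := by
    conv_lhs => rw [← Filter.map_add_atTop_eq_nat m]
    rfl
  have hsum : ∀ n : ℕ, ∑ j ∈ Finset.range (n + m), d j = C + ∑ j ∈ Finset.range n, c j := by
    intro n
    rw [add_comm n m, Finset.sum_range_add]
    simp [h, hC]
  have he : Filter.Tendsto (fun n : ℕ => B (n + m) - A n) Filter.atTop (nhds 0) := by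
    apply squeeze_zero_norm' (a := fun n : ℕ => (|C| + m * M) / n)
    · filter_upwards [eventually_gt_atTop 0] with n hn
      have hn' : (0:ℝ) < n := by exact_mod_cast hn
      set S : ℝ := ∑ j ∈ Finset.range n, c j with hS
      have key : B (n + m) - A n = ((n:ℝ) * C - m * S) / ((n:ℝ) * ((n:ℝ) + m)) := by
        show (∑ j ∈ Finset.range (n + m), d j) / ((n + m : ℕ) : ℝ) - S / (n:ℝ) = _
        rw [hsum n, ← hS]
        push_cast
        field_simp
        ring
      have hSb : |S| ≤ n * M := by
        have := abs_avg_le' hM hc n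
        rw [abs_div, abs_of_nonneg hn'.le, div_le_iff₀ hn'] at this
        calc |S| = |∑ j ∈ Finset.range n, c j| := by rw [hS]
          _ ≤ M * n := this
          _ = n * M := mul_comm _ _
      have hden : |(n:ℝ) * ((n:ℝ) + m)| = (n:ℝ) * ((n:ℝ) + m) := by
        apply abs_of_nonneg; positivity
      rw [Real.norm_eq_abs, key, abs_div, hden,
        div_le_div_iff₀ (by positivity) hn']
      have h1 : |(n:ℝ) * C - m * S| ≤ (n:ℝ) * (|C| + m * M) := by
        calc |(n:ℝ) * C - m * S| ≤ |(n:ℝ) * C| + |(m:ℝ) * S| := abs_sub _ _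
          _ = (n:ℝ) * |C| + m * |S| := by
              rw [abs_mul, abs_mul, Nat.abs_cast, Nat.abs_cast]
          _ ≤ (n:ℝ) * |C| + m * ((n:ℝ) * M) := by
              have : (m:ℝ) * |S| ≤ m * ((n:ℝ) * M) :=
                mul_le_mul_of_nonneg_left hSb (by positivity)
              linarith
          _ ≤ (n:ℝ) * (|C| + m * M) := by nlinarith [hn'.le, Nat.cast_nonneg (α := ℝ) m, hM]
      calc |(n:ℝ) * C - m * S| * n ≤ ((n:ℝ) * (|C| + m * M)) * n :=
            mul_le_mul_of_nonneg_right h1 hn'.le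
        _ ≤ (|C| + m * M) * ((n:ℝ) * ((n:ℝ) + m)) := by
            have h0 : 0 ≤ (|C| + m * M) * ((n:ℝ) * m) := by positivity
            nlinarith [h0]
    · exact tendsto_const_div_atTop_nhds_zero_nat _
  rw [step1]
  have hAbdd := mkLow' (fun n => (abs_le.1 (habsA n)).1)
  have hAcob := mkCob' (fun n => (abs_le.1 (habsA n)).2)
  have hBbdd : IsBoundedUnder (· ≥ ·) atTop (fun n => B (n + m)) :=
    mkLow' (fun n => (abs_le.1 (habsB (n + m))).1)
  have hBcob : IsCoboundedUnder (· ≥ ·) atTop (fun n => B (n + m)) :=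
    mkCob' (fun n => (abs_le.1 (habsB (n + m))).2)
  apply le_antisymm
  · apply le_of_forall_pos_le_add
    intro ε hε
    have hev : ∀ᶠ n in atTop, B (n + m) ≤ A n + ε := by
      filter_upwards [he.eventually_lt_const hε] with n hn
      linarith
    calc liminf (fun n => B (n + m)) atTop ≤ liminf (fun n => A n + ε) atTop :=
          Filter.liminf_le_liminf hev hBbdd
            (mkCob' (K := M + ε) fun n => by have := (abs_le.1 (habsA n)).2; linarith)
      _ = liminf A atTop + ε := liminf_add_const atTop A ε hAcob hAbdd
  · apply le_of_forall_pos_le_add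
    intro ε hε
    have he' : Filter.Tendsto (fun n : ℕ => A n - B (n + m)) Filter.atTop (nhds 0) := by
      have := he.neg
      simpa using this
    have hev : ∀ᶠ n in atTop, A n ≤ B (n + m) + ε := by
      filter_upwards [he'.eventually_lt_const hε] with n hn
      linarith
    calc liminf A atTop ≤ liminf (fun n => B (n + m) + ε) atTop :=
          Filter.liminf_le_liminf hev hAbdd
            (mkCob' (K := M + ε) fun n => by have := (abs_le.1 (habsB (n + m))).2; linarith)
      _ = liminf (fun n => B (n + m)) atTop + ε :=
          liminf_add_const atTop _ ε hBcob hBbdd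

/-! ### Measure-theoretic facts about `uHaar` -/

instance : IsProbabilityMeasure uHaar := by
  constructor
  rw [uHaar, Measure.smul_apply, smul_eq_mul, ENNReal.inv_mul_cancel]
  · exact (isOpen_univ.measure_pos (Measure.addHaar (G := USpace)) Set.univ_nonempty).ne'
  · exact measure_ne_top _ _

instance : uHaar.IsAddHaarMeasure := by
  rw [uHaar]
  refine Measure.IsAddHaarMeasure.smul _ ?_ ?_
  · simp only [ne_eq, ENNReal.inv_eq_zero]; exact measure_ne_top _ _
  · simp only [ne_eq, ENNReal.inv_eq_top]
    exact (isOpen_univ.measure_pos (Measure.addHaar (G := USpace)) Set.univ_nonempty).ne'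

/-- Shifting away the first `m` coordinates of the randomness source. -/
def shiftU (m : ℕ) (u : USpace) : USpace := fun j => u (m + j)

/-- `shiftU` as an additive group homomorphism. -/
def shiftHom (m : ℕ) : USpace →+ USpace where
  toFun := shiftU m
  map_zero' := rfl
  map_add' _ _ := rfl

lemma continuous_shiftU (m : ℕ) : Continuous (shiftU m) :=
  continuous_pi fun j => continuous_apply (m + j)

lemma surjective_shiftU (m : ℕ) : Function.Surjective (shiftU m) := by
  intro v; exact ⟨fun j => v (j - m), funext fun j => by simp [shiftU]⟩

lemma measurable_shiftU (m : ℕ) : Measurable (shiftU m) := (continuous_shiftU m).measurable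

/-- The Haar probability measure is invariant under the shift. -/
lemma map_shiftU (m : ℕ) : Measure.map (shiftU m) uHaar = uHaar := by
  have h1 : (Measure.map (shiftU m) uHaar).IsAddHaarMeasure :=
    Measure.isAddHaarMeasure_map_of_isFiniteMeasure uHaar (shiftHom m) (continuous_shiftU m)
      (surjective_shiftU m)
  have h2 : IsProbabilityMeasure (Measure.map (shiftU m) uHaar) :=
    Measure.isProbabilityMeasure_map (measurable_shiftU m).aemeasurable
  exact Measure.isAddHaarMeasure_eq_of_isProbabilityMeasure _ uHaar

lemma coordReal_mem (u : USpace) (n : ℕ) : coordReal u n ∈ Set.Ico (0:ℝ) 1 := by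
  have := (AddCircle.equivIco 1 0 (u n)).2
  simpa [coordReal] using this

lemma measurable_coordReal (n : ℕ) : Measurable fun u => coordReal u n := by
  have h : Measurable fun x : AddCircle (1:ℝ) => ((AddCircle.measurableEquivIco 1 0) x : ℝ) :=
    measurable_subtype_coe.comp (AddCircle.measurableEquivIco 1 0).measurable
  have : (fun u : USpace => coordReal u n) =
      (fun x : AddCircle (1:ℝ) => ((AddCircle.measurableEquivIco 1 0) x : ℝ)) ∘ fun u => u n := by
    funext u; rfl
  rw [this]; exact h.comp (measurable_pi_apply n)

/-! ### Game-theoretic auxiliary definitions and lemmas -/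

namespace ConcurrentGame

variable {P S A : Type} [Fintype P] [Nonempty P] [Fintype S] [Nonempty S]
  [Fintype A] [Nonempty A] [DecidableEq P]
variable {G : ConcurrentGame P S A}

/-- If a distribution is degenerate at `a` and `0 ≤ u < 1` then `pick` returns `a`. -/
lemma pick_eq {f : (P → A) → ℝ} {a : P → A} (hfa : f a = 1)
    (hf0 : ∀ b, b ≠ a → f b = 0) {u : ℝ} (h0 : 0 ≤ u) (h1 : u < 1) :
    pick (P := P) (A := A) f u = a := by
  classical
  set e := Fintype.equivFin (P → A) with he
  have hcum : ∀ k, cum (P := P) (A := A) f k = if ((e a : ℕ) < k) then 1 else 0 := by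
    intro k
    rw [cum]
    by_cases hk : (e a : ℕ) < k
    · rw [if_pos hk]
      exact (Finset.sum_eq_single_of_mem a
        (Finset.mem_filter.2 ⟨Finset.mem_univ a, hk⟩) (fun b _ hb => hf0 b hb)).trans hfa
    · rw [if_neg hk]
      apply Finset.sum_eq_zero
      intro b hb
      rcases Finset.mem_filter.1 hb with ⟨-, hb2⟩
      apply hf0
      rintro rfl
      exact hk hb2
  have hfilter : (Finset.univ.filter (fun k : Fin (Fintype.card (P → A)) =>
      cum (P := P) (A := A) f ((k:ℕ) + 1) ≤ u)) =
      Finset.univ.filter (fun k : Fin (Fintype.card (P → A)) => (k : ℕ) < (e a : ℕ)) := by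
    ext k
    simp only [Finset.mem_filter, Finset.mem_univ, true_and, hcum]
    by_cases hk : (e a : ℕ) < (k:ℕ) + 1
    · rw [if_pos hk]
      constructor
      · intro hu; linarith
      · intro hlt; omega
    · rw [if_neg hk]
      constructor
      · intro _; omega
      · intro _; exact h0
  have hcard : (Finset.univ.filter (fun k : Fin (Fintype.card (P → A)) =>
      (k:ℕ) < (e a : ℕ))).card = (e a : ℕ) := by
    rw [Finset.card_filter,
      Fin.sum_univ_eq_sum_range (fun k => if k < (e a : ℕ) then 1 else 0), ← Finset.card_filter]
    have : Finset.filter (fun x => x < (e a : ℕ)) (Finset.range (Fintype.card (P → A)))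
        = Finset.range (e a : ℕ) := by
      ext x
      simp only [Finset.mem_filter, Finset.mem_range]
      have := (e a).isLt
      omega
    rw [this, Finset.card_range]
  have hcond : (Finset.univ.filter (fun k : Fin (Fintype.card (P → A)) =>
      cum (P := P) (A := A) f ((k:ℕ) + 1) ≤ u)).card = (e a : ℕ) := by
    rw [hfilter]; exact hcard
  rw [pick, ← he, Equiv.symm_apply_eq]
  split
  · next h => exact Fin.ext hcond
  · next h => exact absurd (hcond ▸ (e a).isLt) h

/-- The `pick` preimage of any action profile is a measurable subset of `ℝ`. -/
lemma measurableSet_pick (f : (P → A) → ℝ) (a : P → A) :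
    MeasurableSet {x : ℝ | pick (P := P) (A := A) f x = a} := by
  classical
  have hcount : Measurable fun x : ℝ => (Finset.univ.filter
      (fun k : Fin (Fintype.card (P → A)) =>
        cum (P := P) (A := A) f ((k:ℕ) + 1) ≤ x)).card := by
    simp only [Finset.card_filter]
    apply Finset.measurable_sum
    intro k _
    exact Measurable.ite measurableSet_Ici measurable_const measurable_const
  have : {x : ℝ | pick (P := P) (A := A) f x = a} =
      (fun x : ℝ => (Finset.univ.filter (fun k : Fin (Fintype.card (P → A)) =>
        cum (P := P) (A := A) f ((k:ℕ) + 1) ≤ x)).card) ⁻¹'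
      {c : ℕ | (Fintype.equivFin (P → A)).symm
        (if h : c < Fintype.card (P → A) then (⟨c, h⟩ : Fin (Fintype.card (P → A)))
          else ⟨0, Fintype.card_pos⟩) = a} := rfl
  rw [this]
  exact hcount trivial

/-- Probability-one actions force all other probabilities to vanish. -/
lemma Strategy.prob_eq_zero {i : P} (σi : G.Strategy i) (x : Hist P S A) (s : S) {a b : A}
    (ha : σi.prob x s a = 1) (hb : b ≠ a) : σi.prob x s b = 0 := by
  classical
  have hsum := σi.sum_one x s
  have hsplit := Finset.add_sum_erase Finset.univ (σi.prob x s) (Finset.mem_univ a)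
  have h0 : ∑ c ∈ Finset.univ.erase a, σi.prob x s c = 0 := by
    rw [← hsplit, ha] at hsum; linarith
  exact (Finset.sum_eq_zero_iff_of_nonneg fun c _ => σi.nonneg x s c).1 h0 b
    (Finset.mem_erase.2 ⟨hb, Finset.mem_univ b⟩)

lemma weight_eq_one {ρ : Profile G} {x : Hist P S A} {s : S} {a : P → A}
    (h : ∀ j, (ρ j).prob x s (a j) = 1) : G.weight ρ x s a = 1 :=
  Finset.prod_eq_one fun j _ => h j

lemma weight_eq_zero {ρ : Profile G} {x : Hist P S A} {s : S} {a b : P → A}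
    (h : ∀ j, (ρ j).prob x s (a j) = 1) (hb : b ≠ a) : G.weight ρ x s b = 0 := by
  obtain ⟨j, hj⟩ := Function.ne_iff.1 hb
  exact Finset.prod_eq_zero (Finset.mem_univ j) ((ρ j).prob_eq_zero x s (h j) hj)

lemma pick_weight {ρ : Profile G} {x : Hist P S A} {s : S} {a : P → A}
    (h : ∀ j, (ρ j).prob x s (a j) = 1) (u : USpace) (n : ℕ) :
    pick (P := P) (A := A) (G.weight ρ x s) (coordReal u n) = a :=
  pick_eq (weight_eq_one h) (fun b hb => weight_eq_zero h hb)
    (coordReal_mem u n).1 (coordReal_mem u n).2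

lemma samplePrefix_succ (ρ : Profile G) (s₀ : S) (u : USpace) (n : ℕ) :
    G.samplePrefix ρ s₀ u (n + 1) = G.samplePrefix ρ s₀ u n ++
      [pick (P := P) (A := A)
        (G.weight ρ (G.histOf s₀ (G.samplePrefix ρ s₀ u n)).1
          (G.histOf s₀ (G.samplePrefix ρ s₀ u n)).2) (coordReal u n)] := rfl

lemma histOf_append (s₀ : S) (L L' : List (P → A)) :
    G.histOf s₀ (L ++ L') =
      ((G.histOf s₀ L).1 ++ (G.histOf (G.histOf s₀ L).2 L').1,
        (G.histOf (G.histOf s₀ L).2 L').2) := by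
  induction L generalizing s₀ with
  | nil => simp [ConcurrentGame.histOf]
  | cons a l ih => simp [ConcurrentGame.histOf, ih]

lemma histOf_length (s₀ : S) (L : List (P → A)) : (G.histOf s₀ L).1.length = L.length := by
  induction L generalizing s₀ with
  | nil => simp [ConcurrentGame.histOf]
  | cons a l ih => simp [ConcurrentGame.histOf, ih]

/-- The action selected by a (pure) strategy. -/
def detAct1 {i : P} (σi : G.Strategy i) (x : Hist P S A) (s : S) : A :=
  if h : ∃ a, σi.prob x s a = 1 then h.choose else Classical.arbitrary A

lemma detAct1_prob {i : P} {σi : G.Strategy i} (h : σi.IsPure) (x : Hist P S A) (s : S) :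
    σi.prob x s (detAct1 σi x s) = 1 := by
  rw [detAct1, dif_pos (h x s)]
  exact (h x s).choose_spec

/-- The action profile selected by a (pure) profile. -/
def detAct (ρ : Profile G) (x : Hist P S A) (s : S) : P → A := fun j => detAct1 (ρ j) x s

/-- The deterministic sequence of action profiles played by a pure profile. -/
def detList (ρ : Profile G) (s₀ : S) : ℕ → List (P → A)
  | 0 => []
  | n + 1 => detList ρ s₀ n ++
      [detAct ρ (G.histOf s₀ (detList ρ s₀ n)).1 (G.histOf s₀ (detList ρ s₀ n)).2]

lemma detList_length (ρ : Profile G) (s₀ : S) (n : ℕ) : (detList ρ s₀ n).length = n := by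
  induction n with
  | zero => rfl
  | succ n ih => simp [detList, ih]

lemma samplePrefix_pure {ρ : Profile G} (hp : IsPureProfile ρ) (s₀ : S) (u : USpace) (n : ℕ) :
    G.samplePrefix ρ s₀ u n = detList ρ s₀ n := by
  induction n with
  | zero => rfl
  | succ n ih =>
      rw [samplePrefix_succ, ih, detList]
      congr 1
      rw [pick_weight (a := detAct ρ (G.histOf s₀ (detList ρ s₀ n)).1
        (G.histOf s₀ (detList ρ s₀ n)).2) (fun j => detAct1_prob (hp j) _ _)]

lemma stateAt_pure {ρ : Profile G} (hp : IsPureProfile ρ) (s₀ : S) (u : USpace) (n : ℕ) :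
    G.stateAt ρ s₀ u n = (G.histOf s₀ (detList ρ s₀ n)).2 := by
  rw [ConcurrentGame.stateAt, samplePrefix_pure hp]

/-- A uniform bound for the rewards of player `i`. -/
def rewBound (G : ConcurrentGame P S A) (i : P) : ℝ := ∑ s : S, |G.rew i s|

lemma abs_rew_le (i : P) (s : S) : |G.rew i s| ≤ rewBound G i :=
  Finset.single_le_sum (fun s' _ => abs_nonneg (G.rew i s')) (Finset.mem_univ s)

lemma rewBound_nonneg (i : P) : 0 ≤ rewBound G i :=
  le_trans (abs_nonneg _) (abs_rew_le (G := G) i (Classical.arbitrary S))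

lemma abs_payOf_le (i : P) (ss : ℕ → S) : |G.payOf i ss| ≤ rewBound G i :=
  abs_liminf_le' (abs_avg_le' (rewBound_nonneg i) (fun j => abs_rew_le i (ss j)))

/-! #### Measurability -/

lemma measurableSet_samplePrefix (ρ : Profile G) (s₀ : S) (n : ℕ) (L : List (P → A)) :
    MeasurableSet {u : USpace | G.samplePrefix ρ s₀ u n = L} := by
  induction n generalizing L with
  | zero =>
      by_cases hL : L = []
      · subst hL
        convert MeasurableSet.univ using 1
        ext u; simp [ConcurrentGame.samplePrefix]
      · convert MeasurableSet.empty using 1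
        ext u
        simp only [Set.mem_setOf_eq, Set.mem_empty_iff_false, iff_false]
        intro hc
        exact hL (by simpa [ConcurrentGame.samplePrefix] using hc.symm)
  | succ n ih =>
      rcases List.eq_nil_or_concat L with rfl | ⟨L', a, rfl⟩
      · convert MeasurableSet.empty using 1
        ext u
        simp only [Set.mem_setOf_eq, Set.mem_empty_iff_false, iff_false]
        rw [samplePrefix_succ]
        intro hc
        exact List.append_ne_nil_of_right_ne_nil _ (by simp) hc
      · have : {u : USpace | G.samplePrefix ρ s₀ u (n+1) = L'.concat a} =
            {u : USpace | G.samplePrefix ρ s₀ u n = L'} ∩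
            ((fun u => coordReal u n) ⁻¹' {x : ℝ | pick (P := P) (A := A)
              (G.weight ρ (G.histOf s₀ L').1 (G.histOf s₀ L').2) x = a}) := by
          ext u
          simp only [Set.mem_setOf_eq, Set.mem_inter_iff, Set.mem_preimage]
          rw [samplePrefix_succ, List.concat_eq_append]
          constructor
          · intro hc
            have h1 : G.samplePrefix ρ s₀ u n = L' ∧
                [pick (P := P) (A := A) (G.weight ρ (G.histOf s₀ (G.samplePrefix ρ s₀ u n)).1
                  (G.histOf s₀ (G.samplePrefix ρ s₀ u n)).2) (coordReal u n)] = [a] :=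
              List.append_inj' hc (by simp)
            refine ⟨h1.1, ?_⟩
            have h2 := List.head_eq_of_cons_eq h1.2
            rw [h1.1] at h2
            exact h2
          · rintro ⟨h1, h2⟩
            rw [h1, h2]
        rw [this]
        exact (ih L').inter ((measurable_coordReal n) (measurableSet_pick _ a))

lemma measurableSet_stateAt (ρ : Profile G) (s₀ : S) (n : ℕ) (s' : S) :
    MeasurableSet {u : USpace | G.stateAt ρ s₀ u n = s'} := by
  have : {u : USpace | G.stateAt ρ s₀ u n = s'} =
      ⋃ L : {L : List (P → A) // (G.histOf s₀ L).2 = s'},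
        {u : USpace | G.samplePrefix ρ s₀ u n = L.1} := by
    ext u
    simp only [Set.mem_setOf_eq, Set.mem_iUnion]
    constructor
    · intro h
      exact ⟨⟨G.samplePrefix ρ s₀ u n, h⟩, rfl⟩
    · rintro ⟨⟨L, hL⟩, hu⟩
      rw [ConcurrentGame.stateAt, hu, hL]
  rw [this]
  exact MeasurableSet.iUnion fun L => measurableSet_samplePrefix ρ s₀ n L.1

lemma measurable_rewState (ρ : Profile G) (s₀ : S) (i : P) (j : ℕ) :
    Measurable fun u : USpace => G.rew i (G.stateAt ρ s₀ u j) := by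
  classical
  have : (fun u : USpace => G.rew i (G.stateAt ρ s₀ u j)) =
      fun u => ∑ s' : S, if G.stateAt ρ s₀ u j = s' then G.rew i s' else 0 := by
    funext u
    rw [Finset.sum_eq_single (G.stateAt ρ s₀ u j)]
    · simp
    · intro s' _ hs'
      rw [if_neg (fun hc => hs' hc.symm)]
    · intro h; exact absurd (Finset.mem_univ _) h
  rw [this]
  apply Finset.measurable_sum
  intro s' _
  exact Measurable.ite (measurableSet_stateAt ρ s₀ j s') measurable_const measurable_const

lemma measurable_payOfState (ρ : Profile G) (s₀ : S) (i : P) :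
    Measurable fun u : USpace => G.payOf i (G.stateAt ρ s₀ u) := by
  apply Measurable.liminf (f := fun n u =>
    (∑ j ∈ Finset.range n, G.rew i (G.stateAt ρ s₀ u j)) / (n : ℝ))
  intro n
  exact (Finset.measurable_sum _ fun j _ => measurable_rewState ρ s₀ i j).div_const _

lemma abs_expPay_le (ρ : Profile G) (s₀ : S) (i : P) :
    |G.expPay ρ s₀ i| ≤ rewBound G i := by
  have h := MeasureTheory.norm_integral_le_of_norm_le_const (μ := uHaar)
    (f := fun u => G.payOf i (G.stateAt ρ s₀ u)) (C := rewBound G i)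
    (Filter.Eventually.of_forall fun u => by
      rw [Real.norm_eq_abs]; exact abs_payOf_le i _)
  simpa [ConcurrentGame.expPay, measure_univ] using h

/-- With a pure profile, the play is deterministic and the expected payoff is the payoff of
the deterministic play. -/
lemma expPay_pure {ρ : Profile G} (hp : IsPureProfile ρ) (s₀ : S) (i : P) :
    G.expPay ρ s₀ i = G.payOf i (fun n => (G.histOf s₀ (detList ρ s₀ n)).2) := by
  rw [ConcurrentGame.expPay]
  have : (fun u : USpace => G.payOf i (G.stateAt ρ s₀ u)) =
      fun _ : USpace => G.payOf i (fun n => (G.histOf s₀ (detList ρ s₀ n)).2) := by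
    funext u
    congr 1
    funext n
    exact stateAt_pure hp s₀ u n
  rw [this, MeasureTheory.integral_const, probReal_univ]
  simp

/-! #### Shifted profiles and spliced strategies -/

/-- The continuation of profile `ρ` after the fixed history `H`. -/
def shiftProfile (ρ : Profile G) (H : Hist P S A) : Profile G := fun j =>
  { prob := fun y s a => (ρ j).prob (H ++ y) s a
    nonneg := fun y s a => (ρ j).nonneg _ _ _
    sum_one := fun y s => (ρ j).sum_one _ _
    supp := fun y s a h => (ρ j).supp _ _ _ h }

lemma shiftProfile_pure {ρ : Profile G} (hp : IsPureProfile ρ) (H : Hist P S A) :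
    IsPureProfile (shiftProfile ρ H) := fun j y s => hp j (H ++ y) s

open Classical in
/-- Follow `σi`; at history `x₀` play `b` (if available); after histories extending
`H` follow `τ` (suitably shifted). -/
def spliceStrat {i : P} (σi τ : G.Strategy i) (H x₀ : Hist P S A) (b : A) : G.Strategy i where
  prob x s a :=
    if H <+: x then τ.prob (x.drop H.length) s a
    else if x = x₀ ∧ b ∈ G.act i s then (if a = b then 1 else 0)
    else σi.prob x s a
  nonneg x s a := by
    try dsimp only
    split_ifs with h1 h2 h3
    · exact τ.nonneg _ _ _
    · exact zero_le_one
    · exact le_refl 0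
    · exact σi.nonneg _ _ _
  sum_one x s := by
    try dsimp only
    split_ifs with h1 h2
    · exact τ.sum_one _ _
    · simp
    · exact σi.sum_one _ _
  supp x s a h := by
    try dsimp only at h
    by_cases h1 : H <+: x
    · rw [if_pos h1] at h
      exact τ.supp _ _ _ h
    · rw [if_neg h1] at h
      by_cases h2 : x = x₀ ∧ b ∈ G.act i s
      · rw [if_pos h2] at h
        by_cases h3 : a = b
        · rw [h3]; exact h2.2
        · rw [if_neg h3] at h; exact absurd rfl h
      · rw [if_neg h2] at h
        exact σi.supp _ _ _ h

lemma spliceStrat_base {i : P} (σi τ : G.Strategy i) (H x₀ : Hist P S A) (b : A)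
    {x : Hist P S A} (s : S) (a : A) (h1 : ¬ H <+: x) (h2 : x ≠ x₀) :
    (spliceStrat σi τ H x₀ b).prob x s a = σi.prob x s a := by
  unfold spliceStrat
  dsimp only
  rw [if_neg h1, if_neg (fun hc : x = x₀ ∧ b ∈ G.act i s => h2 hc.1)]

open Classical in
lemma spliceStrat_at {i : P} (σi τ : G.Strategy i) (H x₀ : Hist P S A) (b : A)
    (s : S) (a : A) (h1 : ¬ H <+: x₀) (hb : b ∈ G.act i s) :
    (spliceStrat σi τ H x₀ b).prob x₀ s a = if a = b then 1 else 0 := by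
  unfold spliceStrat
  dsimp only
  rw [if_neg h1, if_pos (⟨rfl, hb⟩ : x₀ = x₀ ∧ b ∈ G.act i s)]

lemma spliceStrat_shift {i : P} (σi τ : G.Strategy i) (H x₀ : Hist P S A) (b : A)
    (y : Hist P S A) (s : S) (a : A) :
    (spliceStrat σi τ H x₀ b).prob (H ++ y) s a = τ.prob y s a := by
  unfold spliceStrat
  dsimp only
  rw [if_pos (List.prefix_append H y), List.drop_left]

/-! #### The continuation correspondence -/

lemma samplePrefix_shift {ρ ρ' : Profile G} {s₀ t : S} {H : Hist P S A} {L₀ : List (P → A)}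
    (hhist : G.histOf s₀ L₀ = (H, t))
    (hagree : ∀ j y s a, (ρ j).prob (H ++ y) s a = (ρ' j).prob y s a)
    (hpre : ∀ u, G.samplePrefix ρ s₀ u L₀.length = L₀) (u : USpace) (k : ℕ) :
    G.samplePrefix ρ s₀ u (L₀.length + k) =
      L₀ ++ G.samplePrefix ρ' t (shiftU L₀.length u) k := by
  induction k with
  | zero => rw [Nat.add_zero, hpre u]; exact (List.append_nil L₀).symm
  | succ k ih =>
      rw [show L₀.length + (k + 1) = (L₀.length + k) + 1 from rfl,
        samplePrefix_succ, ih, samplePrefix_succ, List.append_assoc]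
      congr 1
      congr 1
      have hh := histOf_append (G := G) s₀ L₀ (G.samplePrefix ρ' t (shiftU L₀.length u) k)
      rw [hhist] at hh
      rw [hh]
      dsimp only
      have hcoord : coordReal u (L₀.length + k) = coordReal (shiftU L₀.length u) k := rfl
      rw [hcoord]
      have hw : G.weight ρ (H ++ (G.histOf t (G.samplePrefix ρ' t (shiftU L₀.length u) k)).1)
          ((G.histOf t (G.samplePrefix ρ' t (shiftU L₀.length u) k)).2)
          = G.weight ρ' (G.histOf t (G.samplePrefix ρ' t (shiftU L₀.length u) k)).1
          ((G.histOf t (G.samplePrefix ρ' t (shiftU L₀.length u) k)).2) := by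
        funext a
        rw [ConcurrentGame.weight, ConcurrentGame.weight]
        exact Finset.prod_congr rfl fun j _ => hagree j _ _ _
      rw [hw]

lemma stateAt_shift {ρ ρ' : Profile G} {s₀ t : S} {H : Hist P S A} {L₀ : List (P → A)}
    (hhist : G.histOf s₀ L₀ = (H, t))
    (hagree : ∀ j y s a, (ρ j).prob (H ++ y) s a = (ρ' j).prob y s a)
    (hpre : ∀ u, G.samplePrefix ρ s₀ u L₀.length = L₀) (u : USpace) (k : ℕ) :
    G.stateAt ρ s₀ u (L₀.length + k) = G.stateAt ρ' t (shiftU L₀.length u) k := by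
  rw [ConcurrentGame.stateAt, ConcurrentGame.stateAt,
    samplePrefix_shift hhist hagree hpre u k,
    histOf_append, hhist]

lemma expPay_shift {ρ ρ' : Profile G} {s₀ t : S} {H : Hist P S A} {L₀ : List (P → A)}
    (hhist : G.histOf s₀ L₀ = (H, t))
    (hagree : ∀ j y s a, (ρ j).prob (H ++ y) s a = (ρ' j).prob y s a)
    (hpre : ∀ u, G.samplePrefix ρ s₀ u L₀.length = L₀) (i : P) :
    G.expPay ρ s₀ i = G.expPay ρ' t i := by
  have key : ∀ u, G.payOf i (G.stateAt ρ s₀ u)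
      = G.payOf i (G.stateAt ρ' t (shiftU L₀.length u)) := by
    intro u
    rw [ConcurrentGame.payOf, ConcurrentGame.payOf]
    exact liminf_avg_shift (M := rewBound G i) _ _ L₀.length
      (fun j => abs_rew_le i _) (fun j => abs_rew_le i _)
      (fun j => congrArg (G.rew i) (stateAt_shift hhist hagree hpre u j))
  have hmeas : AEStronglyMeasurable (fun v => G.payOf i (G.stateAt ρ' t v))
      (Measure.map (shiftU L₀.length) uHaar) := by
    rw [map_shiftU]
    exact (measurable_payOfState ρ' t i).aestronglyMeasurable
  rw [ConcurrentGame.expPay, ConcurrentGame.expPay]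
  calc ∫ u, G.payOf i (G.stateAt ρ s₀ u) ∂uHaar
      = ∫ u, G.payOf i (G.stateAt ρ' t (shiftU L₀.length u)) ∂uHaar :=
        MeasureTheory.integral_congr_ae (Filter.Eventually.of_forall key)
    _ = ∫ v, G.payOf i (G.stateAt ρ' t v) ∂(Measure.map (shiftU L₀.length) uHaar) :=
        (MeasureTheory.integral_map (measurable_shiftU L₀.length).aemeasurable hmeas).symm
    _ = ∫ v, G.payOf i (G.stateAt ρ' t v) ∂uHaar := by rw [map_shiftU]

open Classical in
/-- A default (pure) strategy. -/
def defaultStrat (G : ConcurrentGame P S A) (i : P) : G.Strategy i where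
  prob _ s a := if a = (G.act_nonempty i s).choose then 1 else 0
  nonneg _ s a := by (try dsimp only); split_ifs <;> norm_num
  sum_one _ s := by simp
  supp _ s a h := by
    try dsimp only at h
    by_cases h3 : a = (G.act_nonempty i s).choose
    · rw [h3]; exact (G.act_nonempty i s).choose_spec
    · rw [if_neg h3] at h; exact absurd rfl h

instance (i : P) : Nonempty (G.Strategy i) := ⟨defaultStrat G i⟩

lemma defaultStrat_pure (i : P) : (defaultStrat G i).IsPure := fun x s =>
  ⟨(G.act_nonempty i s).choose, if_pos rfl⟩

instance : Nonempty {σ : Profile G // IsPureProfile σ} :=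
  ⟨⟨fun i => defaultStrat G i, fun i => defaultStrat_pure i⟩⟩

/-! #### The deviation argument -/

lemma detAct_prob {ρ : Profile G} (hp : IsPureProfile ρ) (x : Hist P S A) (s : S) (j : P) :
    (ρ j).prob x s (detAct ρ x s j) = 1 := detAct1_prob (hp j) x s

lemma detList_succ (ρ : Profile G) (s₀ : S) (n : ℕ) :
    detList ρ s₀ (n + 1) = detList ρ s₀ n ++
      [detAct ρ (G.histOf s₀ (detList ρ s₀ n)).1 (G.histOf s₀ (detList ρ s₀ n)).2] := rfl

/-- Core of the deviation argument: if player `i` deviates to action `b` at time `n` of the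
deterministic play of the pure profile `σ`, reaching state `t`, then the punishment value
`pval i t` is at most the equilibrium payoff of `σ`. -/
lemma pval_deviation_le {σ : Profile G} (hpure : IsPureProfile σ) {s₀ : S}
    (hnash : G.IsNash σ s₀) (i : P) (n : ℕ) {b : A}
    (hb : b ∈ G.act i (G.histOf s₀ (detList σ s₀ n)).2) :
    G.pval i (G.tr (G.histOf s₀ (detList σ s₀ n)).2
      (Function.update (detAct σ (G.histOf s₀ (detList σ s₀ n)).1
        (G.histOf s₀ (detList σ s₀ n)).2) i b)) ≤ G.expPay σ s₀ i := by
  classical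
  set x : Hist P S A := (G.histOf s₀ (detList σ s₀ n)).1 with hxdef
  set sn : S := (G.histOf s₀ (detList σ s₀ n)).2 with hsndef
  set aN : P → A := detAct σ x sn with haNdef
  set c : P → A := Function.update aN i b with hcdef
  set t : S := G.tr sn c with htdef
  set H : Hist P S A := x ++ [(sn, c)] with hHdef
  have hxlen : ∀ k : ℕ, ((G.histOf s₀ (detList σ s₀ k)).1).length = k := by
    intro k; rw [histOf_length, detList_length]
  have hHlen : H.length = n + 1 := by
    rw [hHdef, List.length_append, hxdef, hxlen n, List.length_singleton]
  set σ'' : Profile G := shiftProfile σ H with hσ''def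
  have hσ''pure : IsPureProfile σ'' := shiftProfile_pure hpure H
  set L₀ : List (P → A) := detList σ s₀ n ++ [c] with hL₀def
  have hL₀len : L₀.length = n + 1 := by
    rw [hL₀def, List.length_append, detList_length, List.length_singleton]
  have hhist : G.histOf s₀ L₀ = (H, t) := by
    rw [hL₀def, histOf_append]
    rfl
  have hprob : ∀ j, (σ j).prob x sn (aN j) = 1 := fun j => detAct_prob hpure x sn j
  -- the supremum over player i's responses against the shifted profile
  have hclaim2 : ∀ τ : G.Strategy i,
      G.expPay (Function.update σ'' i τ) t i ≤ G.expPay σ s₀ i := by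
    intro τ
    set τ' : G.Strategy i := spliceStrat (σ i) τ H x b with hτ'def
    set ρ : Profile G := Function.update σ i τ' with hρdef
    have hnotpref : ∀ k : ℕ, k ≤ n → ¬ H <+: (G.histOf s₀ (detList σ s₀ k)).1 := by
      intro k hk hc
      have := hc.length_le
      rw [hHlen, hxlen k] at this
      omega
    have hnoteq : ∀ k : ℕ, k < n → (G.histOf s₀ (detList σ s₀ k)).1 ≠ x := by
      intro k hk hc
      have := congrArg List.length hc
      rw [hxlen k, hxdef, hxlen n] at this
      omega
    have hρprob : ∀ k : ℕ, k < n → ∀ j,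
        (ρ j).prob (G.histOf s₀ (detList σ s₀ k)).1 (G.histOf s₀ (detList σ s₀ k)).2
          (detAct σ (G.histOf s₀ (detList σ s₀ k)).1 (G.histOf s₀ (detList σ s₀ k)).2 j)
          = 1 := by
      intro k hk j
      by_cases hj : j = i
      · subst hj
        rw [hρdef, Function.update_self, hτ'def,
          spliceStrat_base _ _ _ _ _ _ _ (hnotpref k hk.le) (hnoteq k hk)]
        exact detAct_prob hpure _ _ _
      · rw [hρdef, Function.update_of_ne hj]
        exact detAct_prob hpure _ _ _
    have hpre1 : ∀ (u : USpace) (k : ℕ), k ≤ n →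
        G.samplePrefix ρ s₀ u k = detList σ s₀ k := by
      intro u k
      induction k with
      | zero => intro _; rfl
      | succ k ih =>
          intro hk
          have hk' : k < n := Nat.lt_of_succ_le hk
          rw [samplePrefix_succ, ih hk'.le, detList_succ]
          congr 1
          rw [pick_weight (a := detAct σ (G.histOf s₀ (detList σ s₀ k)).1
            (G.histOf s₀ (detList σ s₀ k)).2) (hρprob k hk')]
    have hpre : ∀ u : USpace, G.samplePrefix ρ s₀ u L₀.length = L₀ := by
      intro u
      rw [hL₀len, samplePrefix_succ, hpre1 u n le_rfl, hL₀def]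
      congr 1
      have hdeg : ∀ j, (ρ j).prob x sn (c j) = 1 := by
        intro j
        by_cases hj : j = i
        · subst hj
          rw [hρdef, Function.update_self, hτ'def, hcdef, Function.update_self,
            spliceStrat_at _ _ _ _ _ _ _ (hnotpref n le_rfl) hb, if_pos rfl]
        · rw [hρdef, Function.update_of_ne hj, hcdef, Function.update_of_ne hj]
          exact hprob j
      rw [pick_weight (a := c) (by rw [← hxdef, ← hsndef]; exact hdeg)]
    have hagree : ∀ (j : P) (y : Hist P S A) (s : S) (a : A),
        (ρ j).prob (H ++ y) s a = ((Function.update σ'' i τ) j).prob y s a := by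
      intro j y s a
      by_cases hj : j = i
      · subst hj
        rw [hρdef, Function.update_self, Function.update_self, hτ'def]
        exact spliceStrat_shift _ _ _ _ _ _ _ _
      · rw [hρdef, Function.update_of_ne hj, Function.update_of_ne hj]
        rfl
    have heq : G.expPay ρ s₀ i = G.expPay (Function.update σ'' i τ) t i :=
      expPay_shift hhist hagree hpre i
    calc G.expPay (Function.update σ'' i τ) t i = G.expPay ρ s₀ i := heq.symm
      _ ≤ G.expPay σ s₀ i := hnash i τ'
  -- now compare with pval
  have hbddA : ∀ σ' : {σ' : Profile G // IsPureProfile σ'},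
      BddAbove (Set.range fun τ : G.Strategy i =>
        G.expPay (Function.update σ'.1 i τ) t i) := by
    intro σ'
    refine ⟨rewBound G i, ?_⟩
    rintro y ⟨τ, rfl⟩
    exact (abs_le.1 (abs_expPay_le _ _ _)).2
  have h1 : G.pval i t ≤ ⨆ τ : G.Strategy i, G.expPay (Function.update σ'' i τ) t i := by
    apply ciInf_le ?_ (⟨σ'', hσ''pure⟩ : {σ' : Profile G // IsPureProfile σ'})
    refine ⟨-(rewBound G i), ?_⟩
    rintro y ⟨σ', rfl⟩
    exact le_ciSup_of_le (hbddA σ') (Classical.arbitrary _)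
      (abs_le.1 (abs_expPay_le _ _ _)).1
  have h2 : (⨆ τ : G.Strategy i, G.expPay (Function.update σ'' i τ) t i)
      ≤ G.expPay σ s₀ i := ciSup_le hclaim2
  exact h1.trans h2

end ConcurrentGame

end

/-! ## Statement: from a pure Nash equilibrium to a path in the graph `G(z)` -/

/-- Let `σ` be a pure Nash equilibrium of `(G, s₀)` with payoff vector `z`.  Then there is an
infinite path `π` in the graph `G(z)` from `s₀` with `pay_i(π) = z i` for each player `i`. -/
theorem secure_path_of_pure_nash {P S A : Type} [Fintype P] [Nonempty P] [Fintype S]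
    [Nonempty S] [Fintype A] [Nonempty A] [DecidableEq P]
    (G : ConcurrentGame P S A) (s₀ : S) (σ : Profile G) (z : P → ℝ)
    (hpure : ConcurrentGame.IsPureProfile σ) (hnash : G.IsNash σ s₀)
    (hz : ∀ i, G.expPay σ s₀ i = z i) :
    ∃ π : ℕ → S, π 0 = s₀ ∧
      (∀ n, G.secureEdge (fun i => (z i : EReal)) (π n) (π (n + 1))) ∧
      ∀ i, G.payOf i π = z i := by
  classical
  refine ⟨fun n => (G.histOf s₀ (ConcurrentGame.detList σ s₀ n)).2, rfl, ?_, ?_⟩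
  · intro n
    refine ⟨ConcurrentGame.detAct σ (G.histOf s₀ (ConcurrentGame.detList σ s₀ n)).1
      (G.histOf s₀ (ConcurrentGame.detList σ s₀ n)).2, ⟨?_, ?_⟩, ?_⟩
    · intro j
      dsimp only
      refine (σ j).supp (G.histOf s₀ (ConcurrentGame.detList σ s₀ n)).1
        (G.histOf s₀ (ConcurrentGame.detList σ s₀ n)).2 _ ?_
      rw [ConcurrentGame.detAct_prob hpure]
      exact one_ne_zero
    · intro i b hb
      dsimp only at hb ⊢
      have h := ConcurrentGame.pval_deviation_le hpure hnash i n hb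
      rw [hz i] at h
      exact_mod_cast h
    · dsimp only
      rw [ConcurrentGame.detList_succ, ConcurrentGame.histOf_append]
      rfl
  · intro i
    rw [← hz i, ConcurrentGame.expPay_pure hpure]
end

section
/- Let (a_n)_{n∈ℕ} and (p_n)_{n∈ℕ} be sequences of real numbers satisfying a_n = p_n + (1/4)·a_{n+2} for all n ∈ ℕ and 0 ≤ a_n ≤ 4 for all n ∈ ℕ. Then a_n = 1 for all n ∈ ℕ if and only if p_n = 3/4 for all n ∈ ℕ. -/
/-- If real sequences satisfy `a n = p n + (1/4) * a (n+2)` and `0 ≤ a n ≤ 4` for all `n`, then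
`a n = 1` for all `n` iff `p n = 3/4` for all `n`. -/
theorem seq_eq_one_iff (a p : ℕ → ℝ) (hrec : ∀ n, a n = p n + (1 / 4) * a (n + 2))
    (hlb : ∀ n, 0 ≤ a n) (hub : ∀ n, a n ≤ 4) :
    (∀ n, a n = 1) ↔ ∀ n, p n = 3 / 4 := by
  constructor
  · intro h n
    have := hrec n
    rw [h n, h (n+2)] at this
    linarith
  · intro hp
    have key : ∀ k n, |a n - 1| ≤ 3 / 4 ^ k := by
      intro k
      induction k with
      | zero => intro n; rw [abs_le]; constructor <;> [linarith [hlb n]; simpa using by linarith [hub n]]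
      | succ k ih =>
        intro n
        have h1 : a n - 1 = (1/4) * (a (n+2) - 1) := by
          have := hrec n; rw [hp n] at this; linarith
        rw [h1, abs_mul]
        have := ih (n+2)
        rw [abs_of_pos (by norm_num : (0:ℝ) < 1/4)]
        rw [pow_succ]
        calc 1/4 * |a (n+2) - 1| ≤ 1/4 * (3 / 4^k) := by linarith
          _ = 3 / (4^k * 4) := by ring
    intro n
    have : |a n - 1| ≤ 0 := by
      by_contra h
      push_neg at h
      obtain ⟨k, hk⟩ := pow_unbounded_of_one_lt (3 / |a n - 1|) (by norm_num : (1:ℝ) < 4)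
      have h4k : (0:ℝ) < 4 ^ k := by positivity
      have := key k n
      rw [div_lt_iff₀ h] at hk
      have : 3 / 4 ^ k < |a n - 1| := by
        rw [div_lt_iff₀ h4k]; linarith
      linarith [key k n]
    have := abs_nonneg (a n - 1)
    have : |a n - 1| = 0 := le_antisymm ‹_› ‹_›
    linarith [abs_eq_zero.mp this]
end
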